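/- Under the ordinary substitutes condition for the opponent, a constant bidding strategy is optimal: for all k ∈ M and p ∈ G, W(k,p) = Ṽ(k,p), where W is the dynamic-programming value over all eligibility-respecting strategies and Ṽ is the value restricted to strategies that are constant from round 1 onwards. -/

import Mathlib

open Finset Set

/-- Bundles of items: component `j` ranges over `{0, …, m j}`. -/
abbrev Bundle {M : ℕ} (m : Fin M → ℕ) := ∀ j, Fin (m j + 1)

/-- Quasi-linear payoff `v(δ) − ⟨δ, p⟩`. -/
def payoff {M : ℕ} {m : Fin M → ℕ} (v : Bundle m → ℝ) (δ : Bundle m) (p : Fin M → ℝ) : ℝ :=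
  v δ - ∑ j, (δ j : ℝ) * p j

/-- The indifference locus: prices where the demand set is not a singleton. -/
def indiff {M : ℕ} {m : Fin M → ℕ} (v : Bundle m → ℝ) : Set (Fin M → ℝ) :=
  {p | ∃ δ δ' : Bundle m, δ ≠ δ' ∧ (∀ d, payoff v d p ≤ payoff v δ p) ∧
    (∀ d, payoff v d p ≤ payoff v δ' p)}

/-- The SCA price update. -/
def Tup {M : ℕ} {m : Fin M → ℕ} (D : (Fin M → ℝ) → Bundle m) (ε : Fin M → ℝ)
    (k : Bundle m) (p : Fin M → ℝ) : Fin M → ℝ :=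
  fun j => p j + (if m j < (k j : ℕ) + (D p j : ℕ) then ε j else 0)

/-- Bundles eligible after bidding `k`: those with no larger ℓ¹-norm. -/
def elig {M : ℕ} (m : Fin M → ℕ) (k : Bundle m) : Finset (Bundle m) :=
  Finset.univ.filter (fun l : Bundle m => ∑ j, (l j : ℕ) ≤ ∑ j, (k j : ℕ))

theorem elig_nonempty {M : ℕ} (m : Fin M → ℕ) (k : Bundle m) : (elig m k).Nonempty :=
  ⟨k, Finset.mem_filter.mpr ⟨Finset.mem_univ _, le_rfl⟩⟩

/-- An upper bound on the valuation. -/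
noncomputable def Bnd {M : ℕ} {m : Fin M → ℕ} (v : Bundle m → ℝ) : ℝ :=
  Finset.univ.sup' ⟨(fun _ => 0 : Bundle m), Finset.mem_univ _⟩ v

/-- Termination measure. -/
noncomputable def Nmeas {M : ℕ} (B : ℝ) (ε p : Fin M → ℝ) : ℕ :=
  ∑ j, (⌈(B + ε j - p j) / ε j⌉).toNat

set_option maxHeartbeats 1600000

/-- under the substitutes condition a constant strategy is optimal,
i.e. the dynamic-programming value `W` equals the value `Ṽ` of strategies that are
constant from round 1 onwards. -/
theorem stmt5 {M : ℕ} (m : Fin M → ℕ) (hm : ∀ j, 0 < m j)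
    (v : Bundle m → ℝ)
    (hv0 : v (fun _ => 0) = 0) (hvnn : ∀ δ, 0 ≤ v δ)
    (hvmono : ∀ δ δ' : Bundle m, (∀ j, (δ j : ℕ) ≤ (δ' j : ℕ)) → v δ ≤ v δ')
    (pmin : Fin M → ℝ) (hpmin : ∀ j, 0 ≤ pmin j)
    (ε : Fin M → ℝ) (hε : ∀ j, 0 < ε j)
    (G : Set (Fin M → ℝ))
    (hG : G = {p | ∀ j, ∃ n : ℕ, p j = pmin j + n * ε j})
    (hGT : ∀ p ∈ G, p ∉ indiff v)
    (D : (Fin M → ℝ) → Bundle m)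
    (hD : ∀ p ∈ G, ∀ d, d ≠ D p → payoff v d p < payoff v (D p) p)
    (hsub : ∀ (j : Fin M) (p phat : Fin M → ℝ),
      (∀ i, 0 ≤ p i) → (∀ i, 0 ≤ phat i) →
      p ∉ indiff v → phat ∉ indiff v →
      (∀ i, i ≠ j → p i ≤ phat i) → phat j = p j →
      (D p j : ℕ) ≤ (D phat j : ℕ))
    (w : Bundle m → ℝ)
    (V W Vt : Bundle m → (Fin M → ℝ) → ℝ)
    -- the constant-bid value V
    (hVterm : ∀ k p, (∀ j, (k j : ℕ) + (D p j : ℕ) ≤ m j) →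
      V k p = w k - ∑ j, (k j : ℝ) * p j)
    (hVstep : ∀ k p, ¬ (∀ j, (k j : ℕ) + (D p j : ℕ) ≤ m j) →
      V k p = V k (Tup D ε k p))
    -- the dynamic-programming value W
    (hWterm : ∀ k p, (∀ j, (k j : ℕ) + (D p j : ℕ) ≤ m j) →
      W k p = w k - ∑ j, (k j : ℝ) * p j)
    (hWstep : ∀ k p, ¬ (∀ j, (k j : ℕ) + (D p j : ℕ) ≤ m j) →
      W k p = (elig m k).sup' (elig_nonempty m k) (fun l => W l (Tup D ε k p)))
    -- the value Ṽ of strategies constant from round 1 on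
    (hVtterm : ∀ k p, (∀ j, (k j : ℕ) + (D p j : ℕ) ≤ m j) →
      Vt k p = w k - ∑ j, (k j : ℝ) * p j)
    (hVtstep : ∀ k p, ¬ (∀ j, (k j : ℕ) + (D p j : ℕ) ≤ m j) →
      Vt k p = (elig m k).sup' (elig_nonempty m k) (fun l => V l (Tup D ε k p))) :
    ∀ (k : Bundle m), ∀ p ∈ G, W k p = Vt k p := by
  subst hG
  set Gs : Set (Fin M → ℝ) := {p | ∀ j, ∃ n : ℕ, p j = pmin j + n * ε j} with hGs
  set B : ℝ := Bnd v with hB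
  -- basic grid facts
  have hGnn : ∀ p ∈ Gs, ∀ j, 0 ≤ p j := by
    intro p hp j
    obtain ⟨n, hn⟩ := hp j
    rw [hn]
    have : (0:ℝ) ≤ (n:ℝ) * ε j := mul_nonneg (Nat.cast_nonneg n) (hε j).le
    linarith [hpmin j]
  have hTmem : ∀ p ∈ Gs, ∀ k : Bundle m, Tup D ε k p ∈ Gs := by
    intro p hp k j
    obtain ⟨n, hn⟩ := hp j
    by_cases h : m j < (k j : ℕ) + (D p j : ℕ)
    · exact ⟨n + 1, by simp [Tup, h, hn]; push_cast; ring⟩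
    · exact ⟨n, by simp [Tup, h, hn]⟩
  have hTge : ∀ (p : Fin M → ℝ) (k : Bundle m), p ≤ Tup D ε k p := by
    intro p k j
    simp only [Tup]
    split_ifs with h
    · linarith [hε j]
    · simp
  have hstep : ∀ p ∈ Gs, ∀ q ∈ Gs, ∀ j, p j < q j → p j + ε j ≤ q j := by
    intro p hp q hq j hlt
    obtain ⟨a, ha⟩ := hp j
    obtain ⟨b, hb⟩ := hq j
    have hab : (a:ℝ) * ε j < (b:ℝ) * ε j := by rw [ha, hb] at hlt; linarith
    have : a < b := by
      by_contra hc
      push_neg at hc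
      have : (b:ℝ) * ε j ≤ (a:ℝ) * ε j :=
        mul_le_mul_of_nonneg_right (by exact_mod_cast hc) (hε j).le
      linarith
    have : (a:ℝ) + 1 ≤ (b:ℝ) := by exact_mod_cast this
    have := mul_le_mul_of_nonneg_right this (hε j).le
    rw [ha, hb]; nlinarith
  have hDopt : ∀ p ∈ Gs, ∀ d, payoff v d p ≤ payoff v (D p) p := by
    intro p hp d
    by_cases h : d = D p
    · rw [h]
    · exact (hD p hp d h).le
  have hDbound : ∀ p ∈ Gs, ∀ j, 1 ≤ (D p j : ℕ) → p j ≤ B := by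
    intro p hp j hj
    have h0 : payoff v (fun _ => 0) p = 0 := by
      simp [payoff, hv0]
    have h1 : 0 ≤ payoff v (D p) p := by
      rw [← h0]; exact hDopt p hp _
    have h2 : p j ≤ ∑ i, ((D p i : ℕ) : ℝ) * p i := by
      have hterm : p j ≤ ((D p j : ℕ) : ℝ) * p j := by
        have : (1:ℝ) ≤ ((D p j : ℕ) : ℝ) := by exact_mod_cast hj
        nlinarith [hGnn p hp j]
      calc p j ≤ ((D p j : ℕ) : ℝ) * p j := hterm
        _ ≤ ∑ i, ((D p i : ℕ) : ℝ) * p i := by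
            apply Finset.single_le_sum (f := fun i => ((D p i : ℕ) : ℝ) * p i)
              (fun i _ => mul_nonneg (Nat.cast_nonneg _) (hGnn p hp i)) (Finset.mem_univ j)
    have h3 : v (D p) ≤ B := Finset.le_sup' v (Finset.mem_univ (D p))
    have : ∑ i, ((D p i : ℕ) : ℝ) * p i ≤ v (D p) := by
      have := h1; simp only [payoff] at this; linarith
    linarith
  -- measure decrease
  have hNdec : ∀ p ∈ Gs, ∀ k : Bundle m,
      ¬ (∀ j, (k j : ℕ) + (D p j : ℕ) ≤ m j) →
      Nmeas B ε (Tup D ε k p) < Nmeas B ε p := by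
    intro p hp k hnt
    push_neg at hnt
    obtain ⟨j0, hj0⟩ := hnt
    have key : ∀ j, m j < (k j : ℕ) + (D p j : ℕ) →
        (⌈(B + ε j - Tup D ε k p j) / ε j⌉).toNat < (⌈(B + ε j - p j) / ε j⌉).toNat := by
      intro j hj
      have hD1 : 1 ≤ (D p j : ℕ) := by
        have := (k j).isLt; omega
      have hpB : p j ≤ B := hDbound p hp j hD1
      have hT : Tup D ε k p j = p j + ε j := by simp [Tup, hj]
      have harg : (B + ε j - Tup D ε k p j) / ε j = (B + ε j - p j) / ε j - 1 := by
        have hne : ε j ≠ 0 := (hε j).ne'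
        rw [hT]; field_simp; ring
      have hceil : ⌈(B + ε j - Tup D ε k p j) / ε j⌉ = ⌈(B + ε j - p j) / ε j⌉ - 1 := by
        rw [harg]
        exact_mod_cast Int.ceil_sub_intCast ((B + ε j - p j) / ε j) 1
      have hge1 : (1:ℤ) ≤ ⌈(B + ε j - p j) / ε j⌉ := by
        have : (1:ℝ) ≤ (B + ε j - p j) / ε j := by
          rw [le_div_iff₀ (hε j)]; linarith
        exact_mod_cast Int.le_ceil_iff.mpr (by push_cast; linarith)
      omega
    have hle : ∀ j, (⌈(B + ε j - Tup D ε k p j) / ε j⌉).toNat ≤ (⌈(B + ε j - p j) / ε j⌉).toNat := by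
      intro j
      by_cases hj : m j < (k j : ℕ) + (D p j : ℕ)
      · exact (key j hj).le
      · simp [Tup, hj]
    exact Finset.sum_lt_sum (fun j _ => hle j) ⟨j0, Finset.mem_univ j0, key j0 (by omega)⟩
  -- unrolling V to a terminal price
  have keyVT : ∀ n : ℕ, ∀ p ∈ Gs, Nmeas B ε p ≤ n → ∀ l : Bundle m,
      ∃ q ∈ Gs, p ≤ q ∧ (∀ j, (l j : ℕ) + (D q j : ℕ) ≤ m j) ∧
        V l p = w l - ∑ j, (l j : ℝ) * q j := by
    intro n
    induction n with
    | zero =>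
      intro p hp hN l
      by_cases hterm : ∀ j, (l j : ℕ) + (D p j : ℕ) ≤ m j
      · exact ⟨p, hp, le_rfl, hterm, hVterm l p hterm⟩
      · exact absurd (hNdec p hp l hterm) (by omega)
    | succ n IH =>
      intro p hp hN l
      by_cases hterm : ∀ j, (l j : ℕ) + (D p j : ℕ) ≤ m j
      · exact ⟨p, hp, le_rfl, hterm, hVterm l p hterm⟩
      · have hN' : Nmeas B ε (Tup D ε l p) ≤ n := by
          have := hNdec p hp l hterm; omega
        obtain ⟨q, hqG, hq1, hq2, hq3⟩ := IH (Tup D ε l p) (hTmem p hp l) hN' l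
        exact ⟨q, hqG, le_trans (hTge p l) hq1, hq2, by rw [hVstep l p hterm, hq3]⟩
  -- lower bound for V from any larger terminal price
  have keyVlb : ∀ n : ℕ, ∀ p ∈ Gs, Nmeas B ε p ≤ n → ∀ l : Bundle m, ∀ q ∈ Gs,
      p ≤ q → (∀ j, (l j : ℕ) + (D q j : ℕ) ≤ m j) →
      w l - ∑ j, (l j : ℝ) * q j ≤ V l p := by
    intro n
    induction n with
    | zero =>
      intro p hp hN l q hq hpq hqterm
      by_cases hterm : ∀ j, (l j : ℕ) + (D p j : ℕ) ≤ m j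
      · rw [hVterm l p hterm]
        have : ∑ j, (l j : ℝ) * p j ≤ ∑ j, (l j : ℝ) * q j :=
          Finset.sum_le_sum fun j _ => mul_le_mul_of_nonneg_left (hpq j) (Nat.cast_nonneg _)
        linarith
      · exact absurd (hNdec p hp l hterm) (by omega)
    | succ n IH =>
      intro p hp hN l q hq hpq hqterm
      by_cases hterm : ∀ j, (l j : ℕ) + (D p j : ℕ) ≤ m j
      · rw [hVterm l p hterm]
        have : ∑ j, (l j : ℝ) * p j ≤ ∑ j, (l j : ℝ) * q j :=
          Finset.sum_le_sum fun j _ => mul_le_mul_of_nonneg_left (hpq j) (Nat.cast_nonneg _)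
        linarith
      · have hTle : Tup D ε l p ≤ q := by
          intro j
          by_cases hj : m j < (l j : ℕ) + (D p j : ℕ)
          · have hne : p j ≠ q j := by
              intro heq
              have := hsub j p q (hGnn p hp) (hGnn q hq) (hGT p hp) (hGT q hq)
                (fun i _ => hpq i) heq.symm
              have := hqterm j
              omega
            have : p j < q j := lt_of_le_of_ne (hpq j) hne
            have := hstep p hp q hq j this
            simp [Tup, hj]; linarith
          · simp [Tup, hj]; exact hpq j
        have hN' : Nmeas B ε (Tup D ε l p) ≤ n := by
          have := hNdec p hp l hterm; omega
        rw [hVstep l p hterm]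
        exact IH (Tup D ε l p) (hTmem p hp l) hN' l q hq hTle hqterm
  -- V is antitone in the price (on the grid)
  have keyVmono : ∀ p ∈ Gs, ∀ p' ∈ Gs, p ≤ p' → ∀ l : Bundle m, V l p' ≤ V l p := by
    intro p hp p' hp' hpp' l
    obtain ⟨q, hqG, hq1, hq2, hq3⟩ := keyVT (Nmeas B ε p') p' hp' le_rfl l
    rw [hq3]
    exact keyVlb (Nmeas B ε p) p hp le_rfl l q hqG (le_trans hpp' hq1) hq2
  -- V ≤ Vt pointwise
  have keyVtgeV : ∀ p ∈ Gs, ∀ l : Bundle m, V l p ≤ Vt l p := by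
    intro p hp l
    by_cases hterm : ∀ j, (l j : ℕ) + (D p j : ℕ) ≤ m j
    · rw [hVtterm l p hterm, hVterm l p hterm]
    · rw [hVtstep l p hterm, hVstep l p hterm]
      have hmem : l ∈ elig m l := by
        simp only [elig, Finset.mem_filter]
        exact ⟨Finset.mem_univ _, le_rfl⟩
      exact Finset.le_sup' (fun l' => V l' (Tup D ε l p)) hmem
  -- Vt l p bounded by the sup of V over a larger eligibility set
  have keyVtle : ∀ p ∈ Gs, ∀ k : Bundle m, ∀ l ∈ elig m k,
      Vt l p ≤ (elig m k).sup' (elig_nonempty m k) (fun l' => V l' p) := by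
    intro p hp k l hl
    by_cases hterm : ∀ j, (l j : ℕ) + (D p j : ℕ) ≤ m j
    · rw [hVtterm l p hterm, ← hVterm l p hterm]
      exact Finset.le_sup' (fun l' => V l' p) hl
    · rw [hVtstep l p hterm]
      apply Finset.sup'_le
      intro l' hl'
      have h1 : V l' (Tup D ε l p) ≤ V l' p :=
        keyVmono p hp (Tup D ε l p) (hTmem p hp l) (hTge p l) l'
      have h2 : l' ∈ elig m k := by
        simp only [elig, Finset.mem_filter] at hl hl' ⊢
        exact ⟨Finset.mem_univ _, le_trans hl'.2 hl.2⟩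
      exact le_trans h1 (Finset.le_sup' (fun l' => V l' p) h2)
  -- main induction
  have main : ∀ n : ℕ, ∀ p ∈ Gs, Nmeas B ε p ≤ n → ∀ k : Bundle m, W k p = Vt k p := by
    intro n
    induction n with
    | zero =>
      intro p hp hN k
      by_cases hterm : ∀ j, (k j : ℕ) + (D p j : ℕ) ≤ m j
      · rw [hWterm k p hterm, hVtterm k p hterm]
      · exact absurd (hNdec p hp k hterm) (by omega)
    | succ n IH =>
      intro p hp hN k
      by_cases hterm : ∀ j, (k j : ℕ) + (D p j : ℕ) ≤ m j
      · rw [hWterm k p hterm, hVtterm k p hterm]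
      · rw [hWstep k p hterm, hVtstep k p hterm]
        have hqG : Tup D ε k p ∈ Gs := hTmem p hp k
        have hqN : Nmeas B ε (Tup D ε k p) ≤ n := by
          have := hNdec p hp k hterm; omega
        have hW : ∀ l ∈ elig m k, W l (Tup D ε k p) = Vt l (Tup D ε k p) :=
          fun l _ => IH (Tup D ε k p) hqG hqN l
        rw [Finset.sup'_congr (elig_nonempty m k) rfl hW]
        apply le_antisymm
        · exact Finset.sup'_le _ _ fun l hl => keyVtle (Tup D ε k p) hqG k l hl
        · exact Finset.sup'_le _ _ fun l hl =>
            le_trans (keyVtgeV (Tup D ε k p) hqG l)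
              (Finset.le_sup' (fun l' => Vt l' (Tup D ε k p)) hl)
  intro k p hp
  exact main (Nmeas B ε p) p hp le_rfl k
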